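/- Let F be a distribution function on (0,∞) whose tail quantile function U(t) = F^{←}(1−1/t) is regularly varying with index γ ∈ (0,1). Then lim_{τ↑1} ES(τ)/VaR(τ) = 1/(1−γ), where VaR(τ) = U(1/(1−τ)) and ES(τ) = (1/(1−τ)) ∫_τ^1 VaR(α) dα. -/
import Mathlib


open Filter Real intervalIntegral

-- Potter-type bound from monotonicity + convergence at x = 2.
lemma potter_aux (U : ℝ → ℝ) (γ ρ : ℝ) (hγρ : γ < ρ) (hρ : 0 < ρ)
    (hUmono : Monotone U) (hUpos : ∀ t : ℝ, 1 ≤ t → 0 < U t)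
    (hRV : ∀ x : ℝ, 0 < x →
      Tendsto (fun t : ℝ => U (t * x) / U t) atTop (nhds (x ^ γ))) :
    ∃ T : ℝ, 1 ≤ T ∧ ∀ t : ℝ, T ≤ t → ∀ s : ℝ, s ∈ Set.Ioc (0:ℝ) 1 →
      U (t * s⁻¹) ≤ (2:ℝ) ^ ρ * s ^ (-ρ) * U t := by
  have h2 : ((2:ℝ):ℝ) ^ γ < (2:ℝ) ^ ρ := by
    exact Real.rpow_lt_rpow_left_iff (by norm_num) |>.2 hγρ
  have hev : ∀ᶠ t : ℝ in atTop, U (t * 2) / U t < (2:ℝ) ^ ρ :=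
    (hRV 2 two_pos).eventually_lt_const h2
  obtain ⟨T₀, hT₀⟩ := (hev.and (eventually_ge_atTop 1)).exists_forall_of_atTop
  refine ⟨max T₀ 1, le_max_right _ _, ?_⟩
  intro t ht s hs
  have hT0t : ∀ u : ℝ, max T₀ 1 ≤ u → U (u * 2) ≤ (2:ℝ)^ρ * U u := by
    intro u hu
    have h := hT₀ u (le_trans (le_max_left _ _) hu)
    have hu1 : (1:ℝ) ≤ u := le_trans (le_max_right _ _) hu
    have := (div_lt_iff₀ (hUpos u hu1)).1 h.1
    linarith
  have ht1 : (1:ℝ) ≤ t := le_trans (le_max_right _ _) ht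
  -- chain bound
  have hchain : ∀ k : ℕ, U (t * 2 ^ k) ≤ (2:ℝ) ^ (ρ * k) * U t := by
    intro k
    induction k with
    | zero => simp
    | succ k ih =>
      have htk : max T₀ 1 ≤ t * 2 ^ k := by
        calc max T₀ 1 ≤ t := ht
        _ ≤ t * 2 ^ k := le_mul_of_one_le_right (by linarith) (one_le_pow₀ (by norm_num))
      have h1 : U (t * 2 ^ (k+1)) ≤ (2:ℝ)^ρ * U (t * 2 ^ k) := by
        have := hT0t (t * 2 ^ k) htk
        rw [mul_assoc, ← pow_succ] at this
        exact this
      push_cast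
      calc U (t * 2 ^ (k+1)) ≤ (2:ℝ)^ρ * U (t * 2 ^ k) := h1
      _ ≤ (2:ℝ)^ρ * ((2:ℝ)^(ρ * k) * U t) := by
          have hUk : 0 ≤ U (t * 2^k) ∨ True := Or.inr trivial
          exact mul_le_mul_of_nonneg_left ih (Real.rpow_nonneg (by norm_num) _)
      _ = (2:ℝ)^(ρ * ((k:ℝ)+1)) * U t := by
          rw [← mul_assoc, ← Real.rpow_add two_pos, mul_add, mul_one, add_comm]
  obtain ⟨hs0, hs1⟩ := hs
  -- find minimal k with s⁻¹ ≤ 2^k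
  obtain ⟨n, hn⟩ := pow_unbounded_of_one_lt (s⁻¹) (by norm_num : (1:ℝ) < 2)
  have hex : ∃ k : ℕ, s⁻¹ ≤ 2 ^ k := ⟨n, hn.le⟩
  classical
  set k := Nat.find hex with hk
  have hk1 : s⁻¹ ≤ (2:ℝ) ^ k := Nat.find_spec hex
  have hk2 : (2:ℝ) ^ k ≤ 2 * s⁻¹ := by
    rcases Nat.eq_zero_or_pos k with h0 | hpos
    · rw [h0, pow_zero]
      have h1 : s * s⁻¹ = 1 := mul_inv_cancel₀ hs0.ne'
      nlinarith [inv_pos.2 hs0]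
    · obtain ⟨m, hm⟩ := Nat.exists_eq_succ_of_ne_zero hpos.ne'
      have hmk : m < k := by omega
      have := Nat.find_min hex hmk
      push_neg at this
      rw [hm, pow_succ]
      nlinarith [this.le]
  have hmain : U (t * s⁻¹) ≤ U (t * 2 ^ k) :=
    hUmono (by nlinarith)
  have h2k : ((2:ℝ) ^ (ρ * k)) ≤ (2:ℝ)^ρ * s ^ (-ρ) := by
    have e1 : (2:ℝ) ^ (ρ * (k:ℝ)) = ((2:ℝ) ^ (k:ℕ)) ^ ρ := by
      rw [← Real.rpow_natCast 2 k, ← Real.rpow_mul (by norm_num), mul_comm]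
    rw [e1]
    calc ((2:ℝ) ^ (k:ℕ)) ^ ρ ≤ (2 * s⁻¹) ^ ρ :=
          Real.rpow_le_rpow (by positivity) hk2 hρ.le
    _ = (2:ℝ)^ρ * s ^ (-ρ) := by
        rw [Real.mul_rpow (by norm_num) (by positivity),
          Real.inv_rpow hs0.le, ← Real.rpow_neg hs0.le]
  calc U (t * s⁻¹) ≤ U (t * 2 ^ k) := hmain
  _ ≤ (2:ℝ) ^ (ρ * k) * U t := hchain k
  _ ≤ (2:ℝ)^ρ * s ^ (-ρ) * U t := by
      exact mul_le_mul_of_nonneg_right h2k (hUpos t ht1).le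

lemma G_tendsto (U : ℝ → ℝ) (γ : ℝ) (hγ : γ ∈ Set.Ioo (0:ℝ) 1)
    (hUmono : Monotone U) (hUpos : ∀ t : ℝ, 1 ≤ t → 0 < U t)
    (hRV : ∀ x : ℝ, 0 < x →
      Tendsto (fun t : ℝ => U (t * x) / U t) atTop (nhds (x ^ γ))) :
    Tendsto (fun t : ℝ => ∫ s in (0:ℝ)..1, U (t * s⁻¹) / U t) atTop
      (nhds (1 / (1 - γ))) := by
  obtain ⟨hγ0, hγ1⟩ := hγ
  set ρ : ℝ := (γ + 1) / 2 with hρdef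
  have hγρ : γ < ρ := by rw [hρdef]; linarith
  have hρ0 : 0 < ρ := by rw [hρdef]; linarith
  have hρ1 : ρ < 1 := by rw [hρdef]; linarith
  obtain ⟨T, hT1, hT⟩ := potter_aux U γ ρ hγρ hρ0 hUmono hUpos hRV
  have hIoc : Set.uIoc (0:ℝ) 1 = Set.Ioc (0:ℝ) 1 := Set.uIoc_of_le zero_le_one
  have key : Tendsto (fun t : ℝ => ∫ s in (0:ℝ)..1, U (t * s⁻¹) / U t) atTop
      (nhds (∫ s in (0:ℝ)..1, s ^ (-γ))) := by
    apply intervalIntegral.tendsto_integral_filter_of_dominated_convergence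
      (fun s => (2:ℝ) ^ ρ * s ^ (-ρ))
    · filter_upwards with t
      exact ((hUmono.measurable.comp
        (measurable_const.mul measurable_inv)).div_const (U t)).aestronglyMeasurable
    · filter_upwards [eventually_ge_atTop T] with t ht
      refine MeasureTheory.ae_of_all _ fun s hs => ?_
      rw [hIoc] at hs
      have ht1 : (1:ℝ) ≤ t := le_trans hT1 ht
      have hs0 := hs.1
      have hs1 := hs.2
      have hinv1 : (1:ℝ) ≤ s⁻¹ := by
        have h1 : s * s⁻¹ = 1 := mul_inv_cancel₀ hs0.ne'
        nlinarith [inv_pos.2 hs0]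
      have hts : (1:ℝ) ≤ t * s⁻¹ := by nlinarith
      have hnum : 0 < U (t * s⁻¹) := hUpos _ hts
      have hden : 0 < U t := hUpos t ht1
      rw [Real.norm_eq_abs, abs_of_pos (div_pos hnum hden), div_le_iff₀ hden]
      exact hT t ht s hs
    · exact (intervalIntegrable_rpow' (by linarith : (-1:ℝ) < -ρ)).const_mul _
    · refine MeasureTheory.ae_of_all _ fun s hs => ?_
      rw [hIoc] at hs
      have hs0 := hs.1
      have := hRV s⁻¹ (inv_pos.2 hs0)
      rwa [Real.inv_rpow hs0.le, ← Real.rpow_neg hs0.le] at this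
  have hval : (∫ s in (0:ℝ)..1, s ^ (-γ)) = 1 / (1 - γ) := by
    rw [integral_rpow (Or.inl (by linarith : (-1:ℝ) < -γ))]
    rw [Real.one_rpow, Real.zero_rpow (by linarith : -γ + 1 ≠ 0)]
    ring_nf
  rwa [hval] at key

/-- If the tail quantile function `U(t) = F^←(1−1/t)` is regularly varying with index
`γ ∈ (0,1)`, then `ES(τ)/VaR(τ) → 1/(1−γ)` as `τ ↑ 1`, where `VaR(τ) = U(1/(1−τ))`
and `ES(τ) = (1/(1−τ)) ∫_τ^1 VaR(α) dα`. -/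
theorem es_div_var_tendsto (U : ℝ → ℝ) (γ : ℝ) (hγ : γ ∈ Set.Ioo (0:ℝ) 1)
    (hUmono : Monotone U) (hUpos : ∀ t : ℝ, 1 ≤ t → 0 < U t)
    (hRV : ∀ x : ℝ, 0 < x →
      Tendsto (fun t : ℝ => U (t * x) / U t) atTop (nhds (x ^ γ))) :
    Tendsto (fun τ : ℝ =>
        ((1 - τ)⁻¹ * ∫ α in τ..1, U (1 / (1 - α))) / U (1 / (1 - τ)))
      (nhdsWithin 1 (Set.Iio 1)) (nhds (1 / (1 - γ))) := by
  have hG := G_tendsto U γ hγ hUmono hUpos hRV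
  have hcomp : Tendsto (fun τ : ℝ => (1 - τ)⁻¹) (nhdsWithin 1 (Set.Iio 1)) atTop := by
    apply tendsto_inv_nhdsGT_zero.comp
    rw [tendsto_nhdsWithin_iff]
    constructor
    · have h : Tendsto (fun τ : ℝ => 1 - τ) (nhds 1) (nhds 0) := by
        exact (Continuous.tendsto' (by fun_prop) 1 0 (by norm_num))
      exact h.mono_left nhdsWithin_le_nhds
    · filter_upwards [self_mem_nhdsWithin] with τ hτ
      exact sub_pos.2 (Set.mem_Iio.1 hτ)
  refine (hG.comp hcomp).congr' ?_
  filter_upwards [self_mem_nhdsWithin] with τ hτ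
  have hτ1 : τ < 1 := hτ
  have he : (1 - τ) ≠ 0 := sub_ne_zero.2 (ne_of_lt hτ1).symm
  have hfun : ∀ s : ℝ, U ((1-τ)⁻¹ * s⁻¹) = (fun α => U (1/(1-α))) (-(1-τ)*s + 1) := by
    intro s
    congr 1
    rw [show (1 - (-(1-τ)*s + 1)) = (1-τ)*s by ring, one_div, mul_inv]
  have hcv : (∫ s in (0:ℝ)..1, U ((1-τ)⁻¹ * s⁻¹))
      = (1-τ)⁻¹ * ∫ α in τ..1, U (1/(1-α)) := by
    calc (∫ s in (0:ℝ)..1, U ((1-τ)⁻¹ * s⁻¹))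
        = ∫ s in (0:ℝ)..1, (fun α => U (1/(1-α))) (-(1-τ)*s + 1) := by
          simp only [hfun]
      _ = (-(1-τ))⁻¹ • ∫ x in (-(1-τ)*0 + 1)..(-(1-τ)*1 + 1), U (1/(1-x)) :=
          intervalIntegral.integral_comp_mul_add (a:=0) (b:=1)
            (fun α => U (1/(1-α))) (neg_ne_zero.2 he) 1
      _ = (1-τ)⁻¹ * ∫ α in τ..1, U (1/(1-α)) := by
          rw [show -(1-τ)*0 + 1 = (1:ℝ) by ring, show -(1-τ)*1 + 1 = τ by ring,
            intervalIntegral.integral_symm, smul_eq_mul, inv_neg, neg_mul_neg]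
  show (fun t : ℝ => ∫ s in (0:ℝ)..1, U (t * s⁻¹) / U t) ((1-τ)⁻¹)
      = ((1 - τ)⁻¹ * ∫ α in τ..1, U (1 / (1 - α))) / U (1 / (1 - τ))
  show (∫ s in (0:ℝ)..1, U ((1-τ)⁻¹ * s⁻¹) / U ((1-τ)⁻¹)) = _
  rw [one_div (1-τ), intervalIntegral.integral_div, hcv]
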